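/- The gradient of the Bessel kernel satisfies ∇B_d^α(x) = −(1/|𝕊^{d−1}|) · (x/|x|^d) · g_α(|x|), where g_α(r) = Γ(d/2)^{-1} ∫₀^∞ s^{d/2−1} e^{−s − α r²/(4s)} ds; moreover g_α is positive, and for α > 0 it is strictly decreasing in r from 1 (at r = 0) to 0 as r → ∞. -/

import Mathlib

open MeasureTheory Real

/-- The Bessel kernel `B_d^α`. -/
noncomputable def besselKernel (d : ℕ) (α : ℝ) (x : EuclideanSpace ℝ (Fin d)) : ℝ :=
  ∫ t in Set.Ioi (0 : ℝ), (4 * Real.pi * t) ^ (-(d : ℝ) / 2) *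
    Real.exp (-‖x‖ ^ 2 / (4 * t) - α * t)

/-- The profile `g_α(r) = Γ(d/2)⁻¹ ∫₀^∞ s^{d/2-1} e^{-s - α r²/(4s)} ds`. -/
noncomputable def besselProfile (d : ℕ) (α : ℝ) (r : ℝ) : ℝ :=
  (Real.Gamma ((d : ℝ) / 2))⁻¹ *
    ∫ s in Set.Ioi (0 : ℝ), s ^ ((d : ℝ) / 2 - 1) * Real.exp (-s - α * r ^ 2 / (4 * s))

open Set Filter

lemma image_div_Ioi {c : ℝ} (hc : 0 < c) : (fun s : ℝ => c / s) '' Set.Ioi 0 = Set.Ioi 0 := by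
  ext y
  constructor
  · rintro ⟨s, hs, rfl⟩
    exact div_pos hc hs
  · intro hy
    refine ⟨c / y, div_pos hc hy, ?_⟩
    field_simp

lemma hasDerivAt_cdiv (c : ℝ) {x : ℝ} (hx : x ≠ 0) :
    HasDerivAt (fun s : ℝ => c / s) (-(c / x ^ 2)) x := by
  simpa [div_eq_mul_inv, mul_neg] using (hasDerivAt_inv hx).const_mul c

lemma injOn_cdiv {c : ℝ} (hc : 0 < c) : Set.InjOn (fun s : ℝ => c / s) (Set.Ioi 0) := by
  intro a ha b hb hab
  simp only [Set.mem_Ioi] at ha hb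
  field_simp at hab
  exact hab.symm

lemma integral_sub_cdiv {c : ℝ} (hc : 0 < c) (g : ℝ → ℝ) :
    ∫ t in Set.Ioi (0:ℝ), g t = ∫ s in Set.Ioi (0:ℝ), (c / s ^ 2) * g (c / s) := by
  have h1 : ∀ s ∈ Set.Ioi (0:ℝ),
      HasDerivWithinAt (fun s : ℝ => c / s) (-(c / s ^ 2)) (Set.Ioi 0) s :=
    fun s hs => (hasDerivAt_cdiv c (ne_of_gt hs)).hasDerivWithinAt
  calc ∫ t in Set.Ioi (0:ℝ), g t
      = ∫ t in (fun s : ℝ => c / s) '' Set.Ioi 0, g t := by rw [image_div_Ioi hc]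
    _ = ∫ s in Set.Ioi (0:ℝ), |(-(c / s ^ 2))| • g (c / s) :=
        integral_image_eq_integral_abs_deriv_smul measurableSet_Ioi h1 (injOn_cdiv hc) g
    _ = _ := by
        refine setIntegral_congr_fun measurableSet_Ioi fun s hs => ?_
        rw [abs_neg, abs_of_pos (div_pos hc (pow_pos (Set.mem_Ioi.mp hs) 2)), smul_eq_mul]

lemma integrableOn_of_sub_cdiv {c : ℝ} (hc : 0 < c) (g : ℝ → ℝ)
    (h : IntegrableOn (fun s : ℝ => (c / s ^ 2) * g (c / s)) (Set.Ioi 0)) :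
    IntegrableOn g (Set.Ioi 0) := by
  have h1 : ∀ s ∈ Set.Ioi (0:ℝ),
      HasDerivWithinAt (fun s : ℝ => c / s) (-(c / s ^ 2)) (Set.Ioi 0) s :=
    fun s hs => (hasDerivAt_cdiv c (ne_of_gt hs)).hasDerivWithinAt
  have := (integrableOn_image_iff_integrableOn_abs_deriv_smul measurableSet_Ioi h1
    (injOn_cdiv hc) g).2 ?_
  · rwa [image_div_Ioi hc] at this
  · refine h.congr_fun (fun s hs => ?_) measurableSet_Ioi
    rw [abs_neg, abs_of_pos (div_pos hc (pow_pos (Set.mem_Ioi.mp hs) 2)), smul_eq_mul]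

lemma continuousOn_core (q γ : ℝ) :
    ContinuousOn (fun s : ℝ => s ^ q * Real.exp (-s - γ / s)) (Set.Ioi 0) := by
  refine ContinuousOn.mul ?_ ?_
  · exact fun s hs =>
      (Real.continuousAt_rpow_const s q (Or.inl (ne_of_gt hs))).continuousWithinAt
  · refine Real.continuous_exp.comp_continuousOn ?_
    exact (continuousOn_id.neg).sub
      (continuousOn_const.div continuousOn_id fun s hs => ne_of_gt hs)

lemma integrableOn_core {q : ℝ} (γ : ℝ) (hq : -1 < q) (hγ : 0 ≤ γ) :
    IntegrableOn (fun s : ℝ => s ^ q * Real.exp (-s - γ / s)) (Set.Ioi 0) := by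
  have hG := Real.GammaIntegral_convergent (by linarith : 0 < q + 1)
  refine Integrable.mono hG ((continuousOn_core q γ).aestronglyMeasurable measurableSet_Ioi) ?_
  filter_upwards [ae_restrict_mem measurableSet_Ioi] with s hs
  have hs0 : (0:ℝ) < s := hs
  rw [Real.norm_eq_abs, Real.norm_eq_abs, abs_of_nonneg (by positivity),
    abs_of_nonneg (by positivity)]
  have h1 : q + 1 - 1 = q := by ring
  rw [h1, mul_comm (Real.exp (-s))]
  refine mul_le_mul_of_nonneg_left ?_ (Real.rpow_nonneg hs0.le q)
  refine Real.exp_le_exp.2 ?_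
  have : 0 ≤ γ / s := div_nonneg hγ hs0.le
  linarith

lemma setIntegral_Ioi_pos {f : ℝ → ℝ} (hf : IntegrableOn f (Set.Ioi 0))
    (hpos : ∀ s ∈ Set.Ioi (0:ℝ), 0 < f s) : 0 < ∫ s in Set.Ioi (0:ℝ), f s := by
  rw [setIntegral_pos_iff_support_of_nonneg_ae ?_ hf]
  · refine lt_of_lt_of_le ?_ (measure_mono (?_ : Set.Ioi (0:ℝ) ⊆ _))
    · rw [Real.volume_Ioi]; exact ENNReal.zero_lt_top
    · exact fun s hs => ⟨ne_of_gt (hpos s hs), hs⟩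
  · filter_upwards [ae_restrict_mem measurableSet_Ioi] with s hs using (hpos s hs).le

lemma core_pos {q : ℝ} (γ : ℝ) (hq : -1 < q) (hγ : 0 ≤ γ) :
    0 < ∫ s in Set.Ioi (0:ℝ), s ^ q * Real.exp (-s - γ / s) :=
  setIntegral_Ioi_pos (integrableOn_core γ hq hγ)
    (fun s hs => mul_pos (Real.rpow_pos_of_pos hs q) (Real.exp_pos _))

lemma core_zero (q : ℝ) (hq : 0 < q) :
    ∫ s in Set.Ioi (0:ℝ), s ^ (q - 1) * Real.exp (-s - 0 / s) = Real.Gamma q := by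
  rw [Real.Gamma_eq_integral hq]
  refine setIntegral_congr_fun measurableSet_Ioi fun s hs => ?_
  rw [zero_div, sub_zero, mul_comm]

lemma core_strict_anti {q γ₁ γ₂ : ℝ} (hq : -1 < q) (h0 : 0 ≤ γ₁) (h : γ₁ < γ₂) :
    (∫ s in Set.Ioi (0:ℝ), s ^ q * Real.exp (-s - γ₂ / s)) <
      ∫ s in Set.Ioi (0:ℝ), s ^ q * Real.exp (-s - γ₁ / s) := by
  have h1 := integrableOn_core γ₁ hq h0
  have h2 := integrableOn_core γ₂ hq (h0.trans h.le)
  have hpos : 0 < ∫ s in Set.Ioi (0:ℝ),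
      (s ^ q * Real.exp (-s - γ₁ / s) - s ^ q * Real.exp (-s - γ₂ / s)) := by
    refine setIntegral_Ioi_pos (h1.sub h2) fun s hs => ?_
    have hs0 : (0:ℝ) < s := hs
    have : Real.exp (-s - γ₂ / s) < Real.exp (-s - γ₁ / s) := by
      refine Real.exp_lt_exp.2 ?_
      have hdiv : γ₁ / s < γ₂ / s := (div_lt_div_iff_of_pos_right hs0).2 h
      linarith
    nlinarith [Real.rpow_pos_of_pos hs0 q]
  rw [integral_sub h1 h2] at hpos
  linarith

lemma pointwise_sub_eq {b c β : ℝ} (hc : 0 < c) {s : ℝ} (hs : 0 < s) :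
    c / 4 / s ^ 2 * (((c/4)/s) ^ b * Real.exp (-c / (4 * ((c/4)/s)) - β * ((c/4)/s)))
      = (c/4) ^ (b+1) * (s ^ (-b-2) * Real.exp (-s - (β*(c/4))/s)) := by
  have hc4 : (0:ℝ) < c / 4 := by positivity
  have e1 : -c / (4 * ((c/4)/s)) - β * ((c/4)/s) = -s - (β*(c/4))/s := by
    field_simp
  rw [e1, Real.div_rpow hc4.le hs.le, Real.rpow_add hc4, Real.rpow_one,
    show -b-2 = -b + -2 by ring, Real.rpow_add hs, Real.rpow_neg hs.le,
    Real.rpow_neg hs.le, show (2:ℝ) = ((2:ℕ):ℝ) by norm_num, Real.rpow_natCast]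
  field_simp

lemma aux_integrable {b c β : ℝ} (hb : b < -1) (hc : 0 < c) (hβ : 0 ≤ β) :
    IntegrableOn (fun t : ℝ => t ^ b * Real.exp (-c / (4 * t) - β * t)) (Set.Ioi 0) := by
  have hc4 : (0:ℝ) < c / 4 := by positivity
  refine integrableOn_of_sub_cdiv hc4 _ ?_
  have h := ((integrableOn_core (β * (c/4)) (by linarith : (-1:ℝ) < -b-2)
      (by positivity)).const_mul ((c/4) ^ (b+1)))
  refine IntegrableOn.congr_fun h (fun s hs => ?_) measurableSet_Ioi
  exact (pointwise_sub_eq hc (Set.mem_Ioi.mp hs)).symm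

lemma sub_integral_eval (b β : ℝ) {c : ℝ} (hc : 0 < c) :
    ∫ t in Set.Ioi (0:ℝ), t ^ b * Real.exp (-c / (4 * t) - β * t)
      = (c/4) ^ (b+1) * ∫ s in Set.Ioi (0:ℝ), s ^ (-b-2) * Real.exp (-s - (β*(c/4))/s) := by
  rw [integral_sub_cdiv (show (0:ℝ) < c/4 by positivity)
    (fun t => t ^ b * Real.exp (-c / (4 * t) - β * t)), ← integral_const_mul]
  exact setIntegral_congr_fun measurableSet_Ioi fun s hs =>
    pointwise_sub_eq hc (Set.mem_Ioi.mp hs)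

lemma besselProfile_eq (d : ℕ) (α r : ℝ) :
    besselProfile d α r = (Real.Gamma ((d:ℝ)/2))⁻¹ *
      ∫ s in Set.Ioi (0:ℝ), s ^ ((d:ℝ)/2 - 1) * Real.exp (-s - (α * r ^ 2/4)/s) := by
  unfold besselProfile
  congr 1
  exact setIntegral_congr_fun measurableSet_Ioi fun s _ => by rw [div_div]

section ddef
variable {d : ℕ} (hd : 3 ≤ d) {α : ℝ} (hα : 0 ≤ α)
include hd

lemma hd_real : (3:ℝ) ≤ (d:ℝ) := by exact_mod_cast hd

lemma hq_gt : (-1:ℝ) < (d:ℝ)/2 - 1 := by have := hd_real hd; linarith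

lemma hGamma_pos : 0 < Real.Gamma ((d:ℝ)/2) :=
  Real.Gamma_pos_of_pos (by have := hd_real hd; linarith)

include hα in
lemma besselProfile_pos (r : ℝ) : 0 < besselProfile d α r := by
  rw [besselProfile_eq]
  exact mul_pos (inv_pos.2 (hGamma_pos hd))
    (core_pos (α * r ^ 2/4) (hq_gt hd) (by positivity))

lemma besselProfile_zero (hα' : 0 < α) : besselProfile d α 0 = 1 := by
  rw [besselProfile_eq]
  have h0 : α * (0:ℝ) ^ 2 / 4 = 0 := by norm_num
  rw [h0]
  have := core_zero ((d:ℝ)/2) (by have := hd_real hd; linarith)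
  rw [this, inv_mul_cancel₀ (ne_of_gt (hGamma_pos hd))]

include hα in
lemma besselProfile_strictAnti (hα' : 0 < α) :
    StrictAntiOn (besselProfile d α) (Set.Ici 0) := by
  intro r₁ h₁ r₂ h₂ h₁₂
  rw [besselProfile_eq, besselProfile_eq]
  have h₁0 : (0:ℝ) ≤ r₁ := h₁
  have hlt : α * r₁ ^ 2 / 4 < α * r₂ ^ 2 / 4 := by
    have : r₁ ^ 2 < r₂ ^ 2 := by nlinarith
    nlinarith
  exact mul_lt_mul_of_pos_left
    (core_strict_anti (hq_gt hd) (by positivity) hlt) (inv_pos.2 (hGamma_pos hd))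

include hα in
lemma besselProfile_tendsto (hα' : 0 < α) :
    Filter.Tendsto (besselProfile d α) Filter.atTop (nhds 0) := by
  have key : Filter.Tendsto
      (fun r : ℝ => ∫ s in Set.Ioi (0:ℝ), s ^ ((d:ℝ)/2 - 1) *
        Real.exp (-s - α * r ^ 2 / (4 * s))) Filter.atTop (nhds 0) := by
    have main := MeasureTheory.tendsto_integral_filter_of_dominated_convergence
      (μ := volume.restrict (Set.Ioi 0)) (l := (Filter.atTop : Filter ℝ))
      (F := fun (r : ℝ) (s : ℝ) => s ^ ((d:ℝ)/2 - 1) * Real.exp (-s - α * r ^ 2 / (4 * s)))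
      (f := fun _ => (0:ℝ))
      (fun s => s ^ ((d:ℝ)/2 - 1) * Real.exp (-s - 0/s)) ?_ ?_ ?_ ?_
    · simpa using main
    · exact Filter.Eventually.of_forall fun r =>
        ((continuousOn_core ((d:ℝ)/2-1) (α * r ^ 2/4)).congr
          (fun s _ => by rw [div_div])).aestronglyMeasurable measurableSet_Ioi
    · refine Filter.Eventually.of_forall fun r => ?_
      filter_upwards [ae_restrict_mem measurableSet_Ioi] with s hs
      have hs0 : (0:ℝ) < s := hs
      rw [Real.norm_eq_abs, abs_of_nonneg (by positivity)]
      rw [zero_div, sub_zero]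
      refine mul_le_mul_of_nonneg_left (Real.exp_le_exp.2 ?_) (Real.rpow_nonneg hs0.le _)
      have : 0 ≤ α * r ^ 2 / (4 * s) := by positivity
      linarith
    · exact integrableOn_core 0 (hq_gt hd) le_rfl
    · filter_upwards [ae_restrict_mem measurableSet_Ioi] with s hs
      have hs0 : (0:ℝ) < s := hs
      have harg : Filter.Tendsto (fun r : ℝ => -s - α * r ^ 2 / (4 * s))
          Filter.atTop Filter.atBot := by
        refine Filter.tendsto_atBot_add_const_left _ (-s) ?_
        refine Filter.tendsto_neg_atTop_atBot.comp ?_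
        refine Filter.Tendsto.atTop_div_const (by positivity) ?_
        exact (Filter.tendsto_pow_atTop (by norm_num)).const_mul_atTop hα'
      have := (Real.tendsto_exp_atBot.comp harg).const_mul (s ^ ((d:ℝ)/2 - 1))
      simpa using this
  unfold besselProfile
  have := key.const_mul (Real.Gamma ((d:ℝ)/2))⁻¹
  simpa using this
end ddef

section grad
variable {d : ℕ} (hd : 3 ≤ d) {α : ℝ} (hα : 0 ≤ α)
include hd

lemma hp_lt : -(d:ℝ)/2 < -1 := by have := hd_real hd; linarith

omit hd in
lemma kernel_cont (u : ℝ) :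
    ContinuousOn (fun t : ℝ => (4*Real.pi*t) ^ (-(d:ℝ)/2) * Real.exp (-u/(4*t) - α*t))
      (Set.Ioi 0) := by
  have h4 : ∀ t ∈ Set.Ioi (0:ℝ), 4*Real.pi*t ≠ 0 := fun t ht =>
    ne_of_gt (by have := Real.pi_pos; have : (0:ℝ) < t := ht; positivity)
  have h4' : ∀ t ∈ Set.Ioi (0:ℝ), 4*t ≠ 0 := fun t ht =>
    ne_of_gt (by have : (0:ℝ) < t := ht; positivity)
  refine ContinuousOn.mul ?_ ?_
  · exact ((continuous_const.mul continuous_id).continuousOn).rpow_const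
      (fun t ht => Or.inl (h4 t ht))
  · refine Real.continuous_exp.comp_continuousOn ?_
    exact (continuousOn_const.div ((continuous_const.mul continuous_id).continuousOn) h4').sub
      ((continuous_const.mul continuous_id).continuousOn)

omit hd in
lemma kernel_cont' (u : ℝ) :
    ContinuousOn (fun t : ℝ =>
      -((4*Real.pi*t) ^ (-(d:ℝ)/2) * Real.exp (-u/(4*t) - α*t) / (4*t))) (Set.Ioi 0) := by
  have h4' : ∀ t ∈ Set.Ioi (0:ℝ), 4*t ≠ 0 := fun t ht =>
    ne_of_gt (by have : (0:ℝ) < t := ht; positivity)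
  exact ((kernel_cont (α := α) u).div
    ((continuous_const.mul continuous_id).continuousOn) h4').neg

include hα in
lemma kernel_integrable {u : ℝ} (hu : 0 < u) :
    IntegrableOn (fun t : ℝ => (4*Real.pi*t) ^ (-(d:ℝ)/2) * Real.exp (-u/(4*t) - α*t))
      (Set.Ioi 0) := by
  have h := (aux_integrable (b := -(d:ℝ)/2) (hp_lt hd) hu hα).const_mul
    ((4*Real.pi) ^ (-(d:ℝ)/2))
  refine IntegrableOn.congr_fun h (fun t ht => ?_) measurableSet_Ioi
  have ht0 : (0:ℝ) < t := ht
  rw [← mul_assoc, ← Real.mul_rpow (by positivity) ht0.le]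

include hα in
lemma kernel_deriv_integrable {u : ℝ} (hu : 0 < u) :
    IntegrableOn (fun t : ℝ =>
      (4*Real.pi*t) ^ (-(d:ℝ)/2) * Real.exp (-u/(4*t) - α*t) / (4*t)) (Set.Ioi 0) := by
  have hb : -(d:ℝ)/2 - 1 < -1 := by have := hd_real hd; linarith
  have h := (aux_integrable (b := -(d:ℝ)/2 - 1) hb hu hα).const_mul
    ((4*Real.pi) ^ (-(d:ℝ)/2) / 4)
  refine IntegrableOn.congr_fun h (fun t ht => ?_) measurableSet_Ioi
  have ht0 : (0:ℝ) < t := ht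
  rw [Real.mul_rpow (by positivity) ht0.le, Real.rpow_sub ht0, Real.rpow_one]
  field_simp

omit hd in
lemma kernel_hasDerivAt (t : ℝ) (ht : 0 < t) (u : ℝ) :
    HasDerivAt (fun u : ℝ => (4*Real.pi*t) ^ (-(d:ℝ)/2) * Real.exp (-u/(4*t) - α*t))
      (-((4*Real.pi*t) ^ (-(d:ℝ)/2) * Real.exp (-u/(4*t) - α*t) / (4*t))) u := by
  have h1 : HasDerivAt (fun u : ℝ => -u/(4*t) - α*t) (-(1:ℝ)/(4*t)) u :=
    (((hasDerivAt_id u).neg).div_const (4*t)).sub_const (α*t)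
  have h2 := (h1.exp).const_mul ((4*Real.pi*t) ^ (-(d:ℝ)/2))
  exact h2.congr_deriv (by ring)

include hα in
lemma hasDerivAt_G {u₀ : ℝ} (hu : 0 < u₀) :
    HasDerivAt (fun u : ℝ => ∫ t in Set.Ioi (0:ℝ),
        (4*Real.pi*t) ^ (-(d:ℝ)/2) * Real.exp (-u/(4*t) - α*t))
      (∫ t in Set.Ioi (0:ℝ),
        -((4*Real.pi*t) ^ (-(d:ℝ)/2) * Real.exp (-u₀/(4*t) - α*t) / (4*t))) u₀ := by
  have hεpos : 0 < u₀/2 := by positivity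
  refine (hasDerivAt_integral_of_dominated_loc_of_deriv_le (s := Metric.ball u₀ (u₀/2)) (Metric.ball_mem_nhds u₀ hεpos)
    (F := fun u t => (4*Real.pi*t) ^ (-(d:ℝ)/2) * Real.exp (-u/(4*t) - α*t))
    (F' := fun u t => -((4*Real.pi*t) ^ (-(d:ℝ)/2) * Real.exp (-u/(4*t) - α*t) / (4*t)))
    (bound := fun t => (4*Real.pi*t) ^ (-(d:ℝ)/2) * Real.exp (-(u₀/2)/(4*t) - α*t) / (4*t))
    ?_ ?_ ?_ ?_ ?_ ?_).2
  · exact Filter.Eventually.of_forall fun u =>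
      ((kernel_cont (α := α) u).aestronglyMeasurable measurableSet_Ioi)
  · exact kernel_integrable hd hα hu
  · exact (kernel_cont' (α := α) u₀).aestronglyMeasurable measurableSet_Ioi
  · filter_upwards [ae_restrict_mem measurableSet_Ioi] with t ht
    intro u hball
    have ht0 : (0:ℝ) < t := ht
    have hu2 : u₀/2 ≤ u := by
      have := abs_lt.1 (mem_ball_iff_norm.1 hball)
      linarith [this.1]
    have hpos : (0:ℝ) < (4*Real.pi*t) ^ (-(d:ℝ)/2) :=
      Real.rpow_pos_of_pos (by have := Real.pi_pos; positivity) _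
    rw [Real.norm_eq_abs, abs_neg, abs_of_nonneg (by positivity)]
    have hexp : Real.exp (-u/(4*t) - α*t) ≤ Real.exp (-(u₀/2)/(4*t) - α*t) := by
      refine Real.exp_le_exp.2 ?_
      have : -u/(4*t) ≤ -(u₀/2)/(4*t) := by
        apply div_le_div_of_nonneg_right ?_ (by positivity)
        · linarith
      linarith
    gcongr
  · exact kernel_deriv_integrable hd hα (by positivity : (0:ℝ) < u₀/2)
  · filter_upwards [ae_restrict_mem measurableSet_Ioi] with t ht
    exact fun u _ => kernel_hasDerivAt t ht u

end grad

section grad2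
variable {d : ℕ} (hd : 3 ≤ d) {α : ℝ} (hα : 0 ≤ α)
include hd hα

lemma D_eval {r : ℝ} (hr : 0 < r) :
    (∫ t in Set.Ioi (0:ℝ),
        -((4*Real.pi*t) ^ (-(d:ℝ)/2) * Real.exp (-r^2/(4*t) - α*t) / (4*t)))
      = -(1/4) * Real.pi ^ (-(d:ℝ)/2) * r ^ (-(d:ℝ)) * Real.Gamma ((d:ℝ)/2)
          * besselProfile d α r := by
  have hπ := Real.pi_pos
  have hr2 : (0:ℝ) < r^2 := by positivity
  rw [integral_neg]
  have step1 : (∫ t in Set.Ioi (0:ℝ),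
      (4*Real.pi*t) ^ (-(d:ℝ)/2) * Real.exp (-r^2/(4*t) - α*t) / (4*t))
      = (4*Real.pi) ^ (-(d:ℝ)/2)/4 *
        ∫ t in Set.Ioi (0:ℝ), t ^ (-(d:ℝ)/2-1) * Real.exp (-r^2/(4*t) - α*t) := by
    rw [← integral_const_mul]
    refine setIntegral_congr_fun measurableSet_Ioi fun t ht => ?_
    have ht0 : (0:ℝ) < t := ht
    rw [Real.mul_rpow (by positivity) ht0.le, Real.rpow_sub ht0, Real.rpow_one]
    field_simp
  rw [step1, sub_integral_eval (-(d:ℝ)/2-1) α hr2]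
  have e1 : -(d:ℝ)/2-1+1 = -(d:ℝ)/2 := by ring
  have e2 : -(-(d:ℝ)/2-1)-2 = (d:ℝ)/2-1 := by ring
  have e3 : α*(r^2/4) = α*r^2/4 := by ring
  rw [e1, e2, e3]
  have hprof : (∫ s in Set.Ioi (0:ℝ), s ^ ((d:ℝ)/2-1) * Real.exp (-s - (α*r^2/4)/s))
      = Real.Gamma ((d:ℝ)/2) * besselProfile d α r := by
    rw [besselProfile_eq, ← mul_assoc, mul_inv_cancel₀ (ne_of_gt (hGamma_pos hd)), one_mul]
  rw [hprof]
  have c1 : (4*Real.pi) ^ (-(d:ℝ)/2) * (r^2/4) ^ (-(d:ℝ)/2)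
      = Real.pi ^ (-(d:ℝ)/2) * r ^ (-(d:ℝ)) := by
    rw [← Real.mul_rpow (by positivity) (by positivity)]
    have : 4*Real.pi*(r^2/4) = Real.pi * r^2 := by ring
    rw [this, Real.mul_rpow hπ.le (by positivity)]
    congr 1
    rw [← Real.rpow_natCast r 2, ← Real.rpow_mul hr.le]
    congr 1
    push_cast
    ring
  linear_combination
    (-(Real.Gamma ((d:ℝ)/2) * besselProfile d α r / 4)) * c1

lemma besselKernel_gradient {x : EuclideanSpace ℝ (Fin d)} (hx : x ≠ 0) :
    gradient (besselKernel d α) x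
      = ((2:ℝ) * (-(1/4) * Real.pi ^ (-(d:ℝ)/2) * ‖x‖ ^ (-(d:ℝ)) * Real.Gamma ((d:ℝ)/2)
          * besselProfile d α ‖x‖)) • x := by
  have hr : 0 < ‖x‖ := norm_pos_iff.2 hx
  have hu : 0 < ‖x‖^2 := by positivity
  have hG := hasDerivAt_G hd hα hu
  rw [D_eval hd hα hr] at hG
  set D : ℝ := -(1/4) * Real.pi ^ (-(d:ℝ)/2) * ‖x‖ ^ (-(d:ℝ)) * Real.Gamma ((d:ℝ)/2)
    * besselProfile d α ‖x‖ with hD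
  have hfd : HasFDerivAt (fun y : EuclideanSpace ℝ (Fin d) => ‖y‖^2)
      ((2:ℕ) • (innerSL ℝ x)) x := (hasStrictFDerivAt_norm_sq x).hasFDerivAt
  have hcomp := hG.comp_hasFDerivAt x hfd
  have hgrad : HasGradientAt (besselKernel d α) (((2:ℝ)*D) • x) x := by
    rw [hasGradientAt_iff_hasFDerivAt]
    refine hcomp.congr_fderiv ?_
    refine ContinuousLinearMap.ext fun y => ?_
    simp only [InnerProductSpace.toDual_apply_apply, ContinuousLinearMap.smul_apply,
      innerSL_apply_apply, real_inner_smul_left, smul_eq_mul, nsmul_eq_mul]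
    push_cast
    ring
  exact hgrad.gradient
end grad2

/-- Gradient formula for the Bessel kernel (Lemma 2.3 (ii)):
`∇B_d^α(x) = -(1/|𝕊^{d-1}|) (x/|x|^d) g_α(|x|)`, with `g_α` positive, and for `α > 0`
strictly decreasing from `1` (at `r = 0`) to `0` at infinity. -/
theorem bessel_gradient_formula (d : ℕ) (hd : 3 ≤ d) (α : ℝ) (hα : 0 ≤ α) :
    (∀ x : EuclideanSpace ℝ (Fin d), x ≠ 0 →
      gradient (besselKernel d α) x
        = (-(1 / (2 * Real.pi ^ ((d : ℝ) / 2) / Real.Gamma ((d : ℝ) / 2))) *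
            ‖x‖ ^ (-(d : ℝ)) * besselProfile d α ‖x‖) • x)
    ∧ (∀ r : ℝ, 0 ≤ r → 0 < besselProfile d α r)
    ∧ (0 < α →
        besselProfile d α 0 = 1 ∧
        StrictAntiOn (besselProfile d α) (Set.Ici 0) ∧
        Filter.Tendsto (besselProfile d α) Filter.atTop (nhds 0)) := by
  refine ⟨?_, ?_, ?_⟩
  · intro x hx
    rw [besselKernel_gradient hd hα hx]
    congr 1
    have hΓ := hGamma_pos hd
    have hπp : (0:ℝ) < Real.pi ^ ((d:ℝ)/2) := Real.rpow_pos_of_pos Real.pi_pos _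
    rw [show Real.pi ^ (-(d:ℝ)/2) = (Real.pi ^ ((d:ℝ)/2))⁻¹ by
      rw [neg_div, Real.rpow_neg Real.pi_pos.le]]
    field_simp
    ring
  · exact fun r _ => besselProfile_pos hd hα r
  · intro hα'
    exact ⟨besselProfile_zero hd hα', besselProfile_strictAnti hd hα hα',
      besselProfile_tendsto hd hα hα'⟩
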